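/- Let X be a compact metric space and let φ₁, …, φ_k : X → X be pairwise commuting CSLI maps, giving an action of the semigroup (ℤ⁺)^k on X by φ_m = φ₁^{m₁} ∘ ⋯ ∘ φ_k^{m_k} for m = (m₁, …, m_k) ∈ (ℤ⁺)^k. Then this action is admissible (i.e., admits a semigroup cocycle ω : (ℤ⁺)^k × X → ℝ) if and only if there exist cocycles ω_i for each φ_i (i = 1, …, k) such that for all i, j ∈ {1, …, k} and all x ∈ X: ω_i(x)·ω_j(φ_i(x)) = ω_j(x)·ω_i(φ_j(x)). -/

import Mathlib

/-- A map is locally injective if every point has a neighborhood on which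
the map is injective. -/
def LocallyInjective {X : Type*} [TopologicalSpace X] (φ : X → X) : Prop :=
  ∀ x : X, ∃ U ∈ nhds x, Set.InjOn φ U

/-- A map of a topological space to itself is CSLI if it is continuous,
surjective and locally injective. -/
def CSLI {X : Type*} [TopologicalSpace X] (φ : X → X) : Prop :=
  Continuous φ ∧ Function.Surjective φ ∧ LocallyInjective φ

/-- A cocycle for a map `φ : X → X` is a continuous nonnegative real function `ω`
such that the sum of `ω` over each fiber of `φ` equals `1`. -/
def IsCocycle {X : Type*} [TopologicalSpace X] (φ : X → X) (ω : X → ℝ) : Prop :=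
  Continuous ω ∧ (∀ x : X, 0 ≤ ω x) ∧ ∀ y : X, ∑ᶠ x ∈ φ ⁻¹' {y}, ω x = 1

/-- `φ` is locally open at `x` if there is an open neighborhood `N` of `x` such that
the restriction of `φ` to `N` is an open map of `N` into `X`. -/
def LocallyOpenAt {X : Type*} [TopologicalSpace X] (φ : X → X) (x : X) : Prop :=
  ∃ N : Set X, IsOpen N ∧ x ∈ N ∧ ∀ O ⊆ N, IsOpen O → IsOpen (φ '' O)

/-- The action of `(ℤ⁺)^k` on `X` generated by the maps `φ₁, …, φ_k`:
`actPow φ m = φ₁^[m₁] ∘ ⋯ ∘ φ_k^[m_k]`. -/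
def actPow {X : Type*} {k : ℕ} (φ : Fin k → X → X) (m : Fin k → ℕ) : X → X :=
  (List.finRange k).foldr (fun i f => (φ i)^[m i] ∘ f) id

/-! ### Auxiliary definitions and lemmas -/

section Aux

variable {X : Type*}

/-- The action associated to an arbitrary list of indices. -/
def actList {k : ℕ} (φ : Fin k → X → X) (l : List (Fin k)) (m : Fin k → ℕ) : X → X :=
  l.foldr (fun i f => (φ i)^[m i] ∘ f) id

lemma actPow_eq_actList {k : ℕ} (φ : Fin k → X → X) (m : Fin k → ℕ) :
    actPow φ m = actList φ (List.finRange k) m := rfl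

lemma actList_nil {k : ℕ} (φ : Fin k → X → X) (m : Fin k → ℕ) :
    actList φ [] m = id := rfl

lemma actList_cons {k : ℕ} (φ : Fin k → X → X) (i : Fin k) (t : List (Fin k))
    (m : Fin k → ℕ) : actList φ (i :: t) m = (φ i)^[m i] ∘ actList φ t m := rfl

/-- The multiplicative cocycle along iterates of a single map. -/
noncomputable def prodCo (φ : X → X) (ω : X → ℝ) (n : ℕ) (x : X) : ℝ :=
  ∏ t ∈ Finset.range n, ω (φ^[t] x)

/-- The candidate semigroup cocycle built from the single-map cocycles,
following the structure of `actList`. -/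
noncomputable def wList {k : ℕ} (φ : Fin k → X → X) (ω : Fin k → X → ℝ) :
    List (Fin k) → (Fin k → ℕ) → X → ℝ
  | [], _, _ => 1
  | i :: t, m, x => prodCo (φ i) (ω i) (m i) (actList φ t m x) * wList φ ω t m x

lemma prodCo_zero (φ : X → X) (ω : X → ℝ) (x : X) : prodCo φ ω 0 x = 1 := by
  simp [prodCo]

lemma prodCo_succ (φ : X → X) (ω : X → ℝ) (n : ℕ) (x : X) :
    prodCo φ ω (n + 1) x = ω (φ^[n] x) * prodCo φ ω n x := by
  simp only [prodCo, Finset.prod_range_succ, mul_comm]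

lemma prodCo_succ' (φ : X → X) (ω : X → ℝ) (n : ℕ) (x : X) :
    prodCo φ ω (n + 1) x = ω x * prodCo φ ω n (φ x) := by
  simp only [prodCo, Finset.prod_range_succ']
  rw [Function.iterate_zero_apply, mul_comm]
  congr 1

lemma prodCo_add (φ : X → X) (ω : X → ℝ) (a b : ℕ) (x : X) :
    prodCo φ ω (a + b) x = prodCo φ ω a x * prodCo φ ω b (φ^[a] x) := by
  simp only [prodCo, Finset.prod_range_add]
  congr 1
  exact Finset.prod_congr rfl fun t _ => by
    rw [← Function.iterate_add_apply, Nat.add_comm]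

lemma prodCo_nonneg {φ : X → X} {ω : X → ℝ} (h : ∀ x, 0 ≤ ω x) (n : ℕ) (x : X) :
    0 ≤ prodCo φ ω n x :=
  Finset.prod_nonneg fun _ _ => h _

lemma prodCo_continuous [TopologicalSpace X] {φ : X → X} {ω : X → ℝ}
    (hφ : Continuous φ) (hω : Continuous ω) (n : ℕ) :
    Continuous fun x => prodCo φ ω n x := by
  simp only [prodCo]
  exact continuous_finset_prod _ fun t _ => hω.comp (hφ.iterate t)

/-- Fibers of a continuous locally injective map on a compact space are finite. -/
lemma fiber_finite [TopologicalSpace X] [CompactSpace X] [T1Space X] {φ : X → X}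
    (hc : Continuous φ) (hli : LocallyInjective φ) (y : X) : (φ ⁻¹' {y}).Finite := by
  have hcl : IsClosed (φ ⁻¹' {y}) := isClosed_singleton.preimage hc
  refine hcl.isCompact.finite ?_
  rw [isDiscrete_iff_discreteTopology, discreteTopology_subtype_iff]
  intro x hx
  obtain ⟨U, hU, hinj⟩ := hli x
  have hxU : x ∈ U := mem_of_mem_nhds hU
  have hxy : φ x = y := hx
  rw [← Filter.empty_mem_iff_bot]
  have hempty : U ∩ ({x}ᶜ ∩ φ ⁻¹' {y}) = ∅ := by
    ext z
    simp only [Set.mem_inter_iff, Set.mem_compl_iff, Set.mem_singleton_iff,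
      Set.mem_preimage, Set.mem_empty_iff_false, iff_false, not_and]
    intro hzU hzx hz
    exact hzx (hinj hzU hxU (by rw [hz, hxy]))
  rw [← hempty]
  exact Filter.inter_mem (Filter.mem_inf_of_left (mem_nhdsWithin_of_mem_nhds hU))
    (Filter.inter_mem (Filter.mem_inf_of_left self_mem_nhdsWithin)
      (Filter.mem_inf_of_right (Filter.mem_principal_self _)))

lemma fiber_comp (g h : X → X) (y : X) :
    (fun x => g (h x)) ⁻¹' {y} = ⋃ z ∈ g ⁻¹' {y}, h ⁻¹' {z} := by
  ext x
  simp only [Set.mem_preimage, Set.mem_singleton_iff, Set.mem_iUnion, exists_prop]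
  constructor
  · intro hx; exact ⟨h x, hx, rfl⟩
  · rintro ⟨z, hz, rfl⟩; exact hz

lemma fiber_finite_comp (g h : X → X) (hg : ∀ y, (g ⁻¹' {y}).Finite)
    (hh : ∀ y, (h ⁻¹' {y}).Finite) (y : X) : ((fun x => g (h x)) ⁻¹' {y}).Finite := by
  rw [fiber_comp]
  exact (hg y).biUnion fun z _ => hh z

lemma fiber_finite_iterate {φ : X → X} (hfib : ∀ y, (φ ⁻¹' {y}).Finite) (n : ℕ) :
    ∀ y, ((φ^[n]) ⁻¹' {y}).Finite := by
  induction n with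
  | zero =>
    intro y
    simpa using Set.finite_singleton y
  | succ n ih =>
    intro y
    have h := fiber_finite_comp φ (φ^[n]) hfib ih y
    rw [Function.iterate_succ']
    exact h

/-- If two nonnegative weights sum to `1` over the fibers of `h` and `g` (with finite
fibers), then the natural product weight sums to `1` over the fibers of `g ∘ h`. -/
lemma sum_fiber_comp (g h : X → X) (w1 w2 : X → ℝ)
    (hg : ∀ y, (g ⁻¹' {y}).Finite) (hh : ∀ y, (h ⁻¹' {y}).Finite)
    (s1 : ∀ y, ∑ᶠ x ∈ h ⁻¹' {y}, w1 x = 1) (s2 : ∀ y, ∑ᶠ x ∈ g ⁻¹' {y}, w2 x = 1)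
    (y : X) : ∑ᶠ x ∈ (fun x => g (h x)) ⁻¹' {y}, w2 (h x) * w1 x = 1 := by
  classical
  have hfin := fiber_finite_comp g h hg hh y
  rw [finsum_mem_eq_finite_toFinset_sum _ hfin]
  have hmaps : ∀ x ∈ hfin.toFinset, h x ∈ (hg y).toFinset := by
    intro x hx
    simp only [Set.Finite.mem_toFinset, Set.mem_preimage, Set.mem_singleton_iff] at *
    exact hx
  rw [← Finset.sum_fiberwise_of_maps_to hmaps]
  have key : ∀ z ∈ (hg y).toFinset,
      (∑ x ∈ hfin.toFinset with h x = z, w2 (h x) * w1 x) = w2 z := by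
    intro z hz
    simp only [Set.Finite.mem_toFinset, Set.mem_preimage, Set.mem_singleton_iff] at hz
    have hset : (hfin.toFinset.filter (fun x => h x = z)) = (hh z).toFinset := by
      ext x
      simp only [Finset.mem_filter, Set.Finite.mem_toFinset, Set.mem_preimage,
        Set.mem_singleton_iff]
      constructor
      · rintro ⟨-, h2⟩; exact h2
      · intro h1; exact ⟨by rw [h1, hz], h1⟩
    rw [hset]
    have hcong : ∀ x ∈ (hh z).toFinset, w2 (h x) * w1 x = w2 z * w1 x := by
      intro x hx
      simp only [Set.Finite.mem_toFinset, Set.mem_preimage, Set.mem_singleton_iff] at hx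
      rw [hx]
    rw [Finset.sum_congr rfl hcong, ← Finset.mul_sum,
      ← finsum_mem_eq_finite_toFinset_sum _ (hh z), s1 z, mul_one]
  rw [Finset.sum_congr rfl key, ← finsum_mem_eq_finite_toFinset_sum _ (hg y), s2 y]

lemma prodCo_fiber_sum {φ : X → X} {ω : X → ℝ}
    (hfib : ∀ y, (φ ⁻¹' {y}).Finite) (hs : ∀ y, ∑ᶠ x ∈ φ ⁻¹' {y}, ω x = 1)
    (n : ℕ) : ∀ y, ∑ᶠ x ∈ (φ^[n]) ⁻¹' {y}, prodCo φ ω n x = 1 := by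
  induction n with
  | zero =>
    intro y
    have h1 : (φ^[0]) ⁻¹' {y} = {y} := by simp
    have h2 : ∑ᶠ x ∈ ({y} : Set X), prodCo φ ω 0 x = prodCo φ ω 0 y :=
      finsum_mem_singleton
    rw [h1, h2, prodCo_zero]
  | succ n ih =>
    intro y
    have hco : (φ^[n + 1]) ⁻¹' {y} = (fun x => φ (φ^[n] x)) ⁻¹' {y} := by
      rw [Function.iterate_succ']; rfl
    rw [hco, finsum_mem_congr rfl (fun x _ => prodCo_succ φ ω n x)]
    exact sum_fiber_comp φ (φ^[n]) (prodCo φ ω n) ω hfib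
      (fiber_finite_iterate hfib n) ih hs y

lemma actList_fiber_finite {k : ℕ} {φ : Fin k → X → X}
    (hfib : ∀ i y, ((φ i) ⁻¹' {y}).Finite) (l : List (Fin k)) (m : Fin k → ℕ) :
    ∀ y, ((actList φ l m) ⁻¹' {y}).Finite := by
  induction l with
  | nil =>
    intro y
    simpa [actList_nil] using Set.finite_singleton y
  | cons i t ih =>
    intro y
    exact fiber_finite_comp ((φ i)^[m i]) (actList φ t m)
      (fiber_finite_iterate (hfib i) (m i)) ih y

lemma wList_fiber_sum {k : ℕ} {φ : Fin k → X → X} {ω : Fin k → X → ℝ}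
    (hfib : ∀ i y, ((φ i) ⁻¹' {y}).Finite)
    (hs : ∀ i y, ∑ᶠ x ∈ (φ i) ⁻¹' {y}, ω i x = 1)
    (l : List (Fin k)) (m : Fin k → ℕ) :
    ∀ y, ∑ᶠ x ∈ (actList φ l m) ⁻¹' {y}, wList φ ω l m x = 1 := by
  induction l with
  | nil =>
    intro y
    have h1 : (actList φ [] m) ⁻¹' {y} = {y} := by simp [actList_nil]
    have h2 : ∑ᶠ x ∈ ({y} : Set X), wList φ ω [] m x = wList φ ω [] m y :=
      finsum_mem_singleton
    rw [h1, h2]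
    simp [wList]
  | cons i t ih =>
    intro y
    exact sum_fiber_comp ((φ i)^[m i]) (actList φ t m) (wList φ ω t m)
      (prodCo (φ i) (ω i) (m i)) (fiber_finite_iterate (hfib i) (m i))
      (actList_fiber_finite hfib t m) ih (prodCo_fiber_sum (hfib i) (hs i) (m i)) y

lemma actList_comm {k : ℕ} {φ : Fin k → X → X}
    (hcomm : ∀ i j, Function.Commute (φ i) (φ j)) (i : Fin k) (a : ℕ)
    (l : List (Fin k)) (m : Fin k → ℕ) (x : X) :
    (φ i)^[a] (actList φ l m x) = actList φ l m ((φ i)^[a] x) := by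
  induction l with
  | nil => rfl
  | cons j t ih =>
    simp only [actList_cons, Function.comp_apply]
    rw [← ih, ((hcomm i j).iterate_left a).iterate_right (m j) (actList φ t m x)]

lemma actList_add {k : ℕ} {φ : Fin k → X → X}
    (hcomm : ∀ i j, Function.Commute (φ i) (φ j))
    (l : List (Fin k)) (m n : Fin k → ℕ) (x : X) :
    actList φ l (m + n) x = actList φ l m (actList φ l n x) := by
  induction l with
  | nil => rfl
  | cons j t ih =>
    simp only [actList_cons, Function.comp_apply]
    rw [Pi.add_apply, Function.iterate_add_apply, ih]
    congr 1
    exact actList_comm hcomm j (n j) t m (actList φ t n x)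

lemma actList_actList_comm {k : ℕ} {φ : Fin k → X → X}
    (hcomm : ∀ i j, Function.Commute (φ i) (φ j))
    (l l' : List (Fin k)) (m n : Fin k → ℕ) (x : X) :
    actList φ l m (actList φ l' n x) = actList φ l' n (actList φ l m x) := by
  induction l with
  | nil => rfl
  | cons i t ih =>
    simp only [actList_cons, Function.comp_apply]
    rw [ih, actList_comm hcomm i (m i) l' n (actList φ t m x)]

lemma actList_continuous [TopologicalSpace X] {k : ℕ} {φ : Fin k → X → X}
    (hc : ∀ i, Continuous (φ i)) (l : List (Fin k)) (m : Fin k → ℕ) :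
    Continuous (actList φ l m) := by
  induction l with
  | nil => exact continuous_id
  | cons i t ih => exact ((hc i).iterate (m i)).comp ih

lemma wList_nonneg {k : ℕ} {φ : Fin k → X → X} {ω : Fin k → X → ℝ}
    (h : ∀ i x, 0 ≤ ω i x) (l : List (Fin k)) (m : Fin k → ℕ) (x : X) :
    0 ≤ wList φ ω l m x := by
  induction l generalizing x with
  | nil => exact zero_le_one
  | cons i t ih => exact mul_nonneg (prodCo_nonneg (h i) _ _) (ih x)

lemma wList_continuous [TopologicalSpace X] {k : ℕ} {φ : Fin k → X → X}
    {ω : Fin k → X → ℝ} (hc : ∀ i, Continuous (φ i)) (hω : ∀ i, Continuous (ω i))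
    (l : List (Fin k)) (m : Fin k → ℕ) :
    Continuous fun x => wList φ ω l m x := by
  induction l with
  | nil => exact continuous_const
  | cons i t ih =>
    exact ((prodCo_continuous (hc i) (hω i) (m i)).comp
      (actList_continuous hc t m)).mul ih

section Exchange

variable {k : ℕ} {φ : Fin k → X → X} {ω : Fin k → X → ℝ}
  (hcompat : ∀ i j x, ω i x * ω j (φ i x) = ω j x * ω i (φ j x))
  (hcomm : ∀ i j, Function.Commute (φ i) (φ j))

include hcompat hcomm

lemma exch1 (i j : Fin k) (b : ℕ) (x : X) :
    ω i x * prodCo (φ j) (ω j) b (φ i x) =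
      prodCo (φ j) (ω j) b x * ω i ((φ j)^[b] x) := by
  induction b generalizing x with
  | zero => simp [prodCo]
  | succ b ih =>
    rw [prodCo_succ', prodCo_succ', ← mul_assoc, hcompat i j x,
      (hcomm j i) x, mul_assoc, ih (φ j x), Function.iterate_succ_apply]
    ring

lemma exch2 (i j : Fin k) (a b : ℕ) (x : X) :
    prodCo (φ i) (ω i) a x * prodCo (φ j) (ω j) b ((φ i)^[a] x) =
      prodCo (φ j) (ω j) b x * prodCo (φ i) (ω i) a ((φ j)^[b] x) := by
  induction a generalizing x with
  | zero => simp [prodCo]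
  | succ a ih =>
    rw [prodCo_succ', Function.iterate_succ_apply, mul_assoc, ih (φ i x),
      ((hcomm j i).iterate_left b) x, ← mul_assoc, exch1 hcompat hcomm i j b x,
      prodCo_succ' (φ i) (ω i) a ((φ j)^[b] x)]
    ring

lemma exch_list (i : Fin k) (a : ℕ) (l : List (Fin k)) (n : Fin k → ℕ) (x : X) :
    prodCo (φ i) (ω i) a (actList φ l n x) * wList φ ω l n x =
      prodCo (φ i) (ω i) a x * wList φ ω l n ((φ i)^[a] x) := by
  induction l generalizing x with
  | nil => simp only [actList_nil, wList, id_eq, mul_one]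
  | cons j t ih =>
    simp only [wList, actList_cons, Function.comp_apply]
    have h1 : actList φ t n ((φ i)^[a] x) = (φ i)^[a] (actList φ t n x) :=
      (actList_comm hcomm i a t n x).symm
    rw [h1]
    have h2 := exch2 hcompat hcomm j i (n j) a (actList φ t n x)
    have h3 := ih x
    linear_combination wList φ ω t n x * h2 +
      prodCo (φ j) (ω j) (n j) ((φ i)^[a] (actList φ t n x)) * h3

lemma wList_add (l : List (Fin k)) (m n : Fin k → ℕ) (x : X) :
    wList φ ω l (m + n) x = wList φ ω l m x * wList φ ω l n (actList φ l m x) := by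
  induction l generalizing x with
  | nil => simp [wList]
  | cons i t ih =>
    simp only [wList, actList_cons, Function.comp_apply, Pi.add_apply]
    have hmn : actList φ t (m + n) x = actList φ t n (actList φ t m x) := by
      rw [actList_add hcomm, actList_actList_comm hcomm]
    rw [hmn, ih x]
    have hcv : actList φ t n ((φ i)^[m i] (actList φ t m x))
        = (φ i)^[m i] (actList φ t n (actList φ t m x)) :=
      (actList_comm hcomm i (m i) t n _).symm
    rw [hcv, show m i + n i = n i + m i from Nat.add_comm _ _, prodCo_add]
    have hE := exch_list hcompat hcomm i (m i) t n (actList φ t m x)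
    have hF := exch2 hcompat hcomm i i (m i) (n i) (actList φ t n (actList φ t m x))
    linear_combination
      (-(wList φ ω t m x * wList φ ω t n (actList φ t m x))) * hF +
      (wList φ ω t m x *
        prodCo (φ i) (ω i) (n i)
          ((φ i)^[m i] (actList φ t n (actList φ t m x)))) * hE

end Exchange

lemma actList_single_notmem {k : ℕ} (φ : Fin k → X → X) (i : Fin k)
    (l : List (Fin k)) (hl : i ∉ l) : actList φ l (Pi.single i 1) = id := by
  induction l with
  | nil => rfl
  | cons j t ih =>
    have hj : j ≠ i := by rintro rfl; exact hl List.mem_cons_self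
    rw [actList_cons, Pi.single_eq_of_ne hj, Function.iterate_zero,
      ih (fun h => hl (List.mem_cons_of_mem _ h)), Function.id_comp]

lemma actList_single_mem {k : ℕ} (φ : Fin k → X → X) (i : Fin k)
    (l : List (Fin k)) (hn : l.Nodup) (hm : i ∈ l) :
    actList φ l (Pi.single i 1) = φ i := by
  induction l with
  | nil => cases hm
  | cons j t ih =>
    rcases List.mem_cons.mp hm with h | h
    · subst h
      rw [actList_cons, Pi.single_eq_same, Function.iterate_one,
        actList_single_notmem φ i t (List.nodup_cons.mp hn).1, Function.comp_id]
    · have hj : j ≠ i := by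
        rintro rfl; exact (List.nodup_cons.mp hn).1 h
      rw [actList_cons, Pi.single_eq_of_ne hj, Function.iterate_zero,
        ih (List.nodup_cons.mp hn).2 h, Function.id_comp]

lemma actPow_single {k : ℕ} (φ : Fin k → X → X) (i : Fin k) :
    actPow φ (Pi.single i 1) = φ i := by
  rw [actPow_eq_actList]
  exact actList_single_mem φ i _ (List.nodup_finRange k) (List.mem_finRange i)

end Aux

/-- The action of `(ℤ⁺)^k` generated by pairwise commuting CSLI maps `φ₁, …, φ_k`
is admissible (admits a semigroup cocycle) if and only if each `φ_i` admits a
cocycle `ω_i` and the compatibility condition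
`ω_i(x)·ω_j(φ_i(x)) = ω_j(x)·ω_i(φ_j(x))` holds for all `i, j, x`. -/
theorem admissible_iff_compatible_cocycles {X : Type*} [MetricSpace X] [CompactSpace X]
    {k : ℕ} (φ : Fin k → X → X) (hφ : ∀ i, CSLI (φ i))
    (hcomm : ∀ i j, φ i ∘ φ j = φ j ∘ φ i) :
    (∃ ω : (Fin k → ℕ) → X → ℝ,
        (∀ m x, 0 ≤ ω m x) ∧
        (∀ (m : Fin k → ℕ) (y : X), ∑ᶠ x ∈ {x : X | actPow φ m x = y}, ω m x = 1) ∧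
        (∀ m, Continuous (ω m)) ∧
        (∀ (m n : Fin k → ℕ) (x : X), ω (m + n) x = ω m x * ω n (actPow φ m x))) ↔
    (∃ ω : Fin k → X → ℝ, (∀ i, IsCocycle (φ i) (ω i)) ∧
        ∀ i j (x : X), ω i x * ω j (φ i x) = ω j x * ω i (φ j x)) := by
  constructor
  · rintro ⟨ω, hnn, hsum, hcont, hmul⟩
    refine ⟨fun i => ω (Pi.single i 1), fun i => ⟨hcont _, fun x => hnn _ x, fun y => ?_⟩, ?_⟩
    · have hset : {x : X | actPow φ (Pi.single i 1) x = y} = φ i ⁻¹' {y} := by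
        rw [actPow_single]; rfl
      rw [← hset]
      exact hsum (Pi.single i 1) y
    · intro i j x
      have h1 := hmul (Pi.single i 1) (Pi.single j 1) x
      have h2 := hmul (Pi.single j 1) (Pi.single i 1) x
      rw [actPow_single φ i] at h1
      rw [actPow_single φ j, add_comm (Pi.single j 1) (Pi.single i 1)] at h2
      rw [← h1, h2]
  · rintro ⟨ω, hco, hcompat⟩
    have hcommF : ∀ i j, Function.Commute (φ i) (φ j) :=
      fun i j x => congrFun (hcomm i j) x
    have hfib : ∀ i y, ((φ i) ⁻¹' {y}).Finite :=
      fun i => fiber_finite (hφ i).1 (hφ i).2.2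
    refine ⟨fun m x => wList φ ω (List.finRange k) m x, ?_, ?_, ?_, ?_⟩
    · exact fun m x => wList_nonneg (fun i x => (hco i).2.1 x) _ m x
    · intro m y
      have hset : {x : X | actPow φ m x = y} = (actList φ (List.finRange k) m) ⁻¹' {y} := by
        rw [actPow_eq_actList]; rfl
      rw [hset]
      exact wList_fiber_sum hfib (fun i => (hco i).2.2) _ m y
    · exact fun m => wList_continuous (fun i => (hφ i).1) (fun i => (hco i).1) _ m
    · intro m n x
      rw [actPow_eq_actList]
      exact wList_add hcompat hcommF _ m n x
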